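/- arXiv:0712.3175 — 2 statements merged into one kernel-verified Lean document; each statement's English description precedes it below -/
import Mathlib

section
/- Let x ∈ G have finite order n and let y ∈ G with y⁻¹xy ∉ ⟨x⟩. Then the bicyclic unit u = 1 + (1 - x)y·x̂ (where x̂ = 1 + x + ... + x^{n-1}) is a nontrivial unit of ZG, i.e., u ≠ 1, and u is a unit with inverse 1 - (1 - x)y·x̂. -/
/-- The canonical involution on the group ring `K[G]`, sending `∑ a_g g` to `∑ a_g g⁻¹`. -/
noncomputable def gstar {K G : Type*} [CommRing K] [Group G] (x : MonoidAlgebra K G) :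
    MonoidAlgebra K G := MonoidAlgebra.mapDomain (fun g => g⁻¹) x

/-- `x̂ = 1 + x + ⋯ + x^(n-1)` in the integral group ring, where `n = orderOf x`. -/
noncomputable def hatZ {G : Type*} [Group G] (x : G) : MonoidAlgebra ℤ G :=
  ∑ i ∈ Finset.range (orderOf x), (MonoidAlgebra.of ℤ G x) ^ i

/-- A nontrivial bicyclic unit: if y⁻¹xy ∉ ⟨x⟩ (x of finite order) then
u = 1 + (1-x)·y·x̂ ≠ 1 and u is a unit with inverse 1 - (1-x)·y·x̂. -/
theorem stmt_7 {G : Type*} [Group G] (x y : G) (hx : IsOfFinOrder x)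
    (hxy : y⁻¹ * x * y ∉ Subgroup.zpowers x) :
    (1 + (1 - MonoidAlgebra.of ℤ G x) * MonoidAlgebra.of ℤ G y * hatZ x
        ≠ (1 : MonoidAlgebra ℤ G)) ∧
    (1 + (1 - MonoidAlgebra.of ℤ G x) * MonoidAlgebra.of ℤ G y * hatZ x) *
      (1 - (1 - MonoidAlgebra.of ℤ G x) * MonoidAlgebra.of ℤ G y * hatZ x) = 1 ∧
    (1 - (1 - MonoidAlgebra.of ℤ G x) * MonoidAlgebra.of ℤ G y * hatZ x) *
      (1 + (1 - MonoidAlgebra.of ℤ G x) * MonoidAlgebra.of ℤ G y * hatZ x) = 1 := by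
  set X := MonoidAlgebra.of ℤ G x with hX
  set Y := MonoidAlgebra.of ℤ G y with hY
  set a := (1 - X) * Y * hatZ x with ha
  have hn : 0 < orderOf x := hx.orderOf_pos
  -- hatZ x * (1 - X) = 0
  have hkill : hatZ x * (1 - X) = 0 := by
    have hx1 : X ^ orderOf x = 1 := by
      rw [hX, ← map_pow, pow_orderOf_eq_one x, map_one]
    have h1 : hatZ x * (X - 1) = 0 := by
      rw [hatZ, geom_sum_mul, hx1, sub_self]
    have h2 : hatZ x * (1 - X) = -(hatZ x * (X - 1)) := by noncomm_ring
    rw [h2, h1, neg_zero]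
  have haa : a * a = 0 := by
    have h2 : a * a = (1 - X) * Y * (hatZ x * (1 - X)) * (Y * hatZ x) := by
      rw [ha]; noncomm_ring
    rw [h2, hkill, mul_zero, zero_mul]
  refine ⟨?_, ?_, ?_⟩
  · -- nontriviality
    intro h
    have ha0 : a = 0 := by
      have := congrArg (· - 1) h
      simpa using this
    -- compute coefficient of a at y
    have hsingle : ∀ g : G, MonoidAlgebra.of ℤ G g = MonoidAlgebra.single g 1 := fun g => rfl
    have hYH : Y * hatZ x = ∑ i ∈ Finset.range (orderOf x),
        MonoidAlgebra.single (y * x ^ i) (1 : ℤ) := by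
      rw [hatZ, Finset.mul_sum]
      refine Finset.sum_congr rfl fun i _ => ?_
      rw [hY, ← map_pow, hsingle, hsingle, MonoidAlgebra.single_mul_single, one_mul]
    have hXYH : X * (Y * hatZ x) = ∑ i ∈ Finset.range (orderOf x),
        MonoidAlgebra.single (x * (y * x ^ i)) (1 : ℤ) := by
      rw [hYH, Finset.mul_sum]
      refine Finset.sum_congr rfl fun i _ => ?_
      rw [hX, hsingle, MonoidAlgebra.single_mul_single, one_mul]
    have hadecomp : a = (Y * hatZ x) - X * (Y * hatZ x) := by
      rw [ha]; noncomm_ring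
    have hay : a.coeff y = 1 := by
      rw [hadecomp, hXYH, hYH]
      classical
      have e1 : (∑ i ∈ Finset.range (orderOf x),
          MonoidAlgebra.single (y * x ^ i) (1 : ℤ)).coeff y = 1 := by
        rw [MonoidAlgebra.coeff_sum, Finsupp.finset_sum_apply]
        have hterm : ∀ i ∈ Finset.range (orderOf x),
            (MonoidAlgebra.single (y * x ^ i) (1 : ℤ)).coeff y
              = if i = 0 then (1:ℤ) else 0 := by
          intro i hi
          rw [MonoidAlgebra.coeff_single, Finsupp.single_apply]
          by_cases h0 : i = 0
          · subst h0; simp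
          · rw [if_neg, if_neg h0]
            intro hyi
            apply h0
            exact Nat.eq_zero_of_dvd_of_lt
              (orderOf_dvd_of_pow_eq_one (mul_eq_left.mp hyi))
              (Finset.mem_range.mp hi)
        rw [Finset.sum_congr rfl hterm, Finset.sum_ite_eq' (Finset.range (orderOf x)) 0
          (fun _ => (1:ℤ))]
        simp [hn]
      have e2 : (∑ i ∈ Finset.range (orderOf x),
          MonoidAlgebra.single (x * (y * x ^ i)) (1 : ℤ)).coeff y = 0 := by
        rw [MonoidAlgebra.coeff_sum, Finsupp.finset_sum_apply]
        refine Finset.sum_eq_zero fun i _ => ?_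
        rw [MonoidAlgebra.coeff_single, Finsupp.single_apply, if_neg]
        intro hc
        apply hxy
        have key : y⁻¹ * x * y = (x ^ i)⁻¹ := by
          calc y⁻¹ * x * y = y⁻¹ * (x * (y * x ^ i)) * (x ^ i)⁻¹ := by group
          _ = y⁻¹ * y * (x ^ i)⁻¹ := by rw [hc]
          _ = (x ^ i)⁻¹ := by group
        exact Subgroup.mem_zpowers_iff.mpr ⟨-(i : ℤ), by
          rw [zpow_neg, zpow_natCast, ← key]⟩
      rw [MonoidAlgebra.coeff_sub, Finsupp.sub_apply, e1, e2, sub_zero]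
    rw [ha0] at hay
    simp at hay
  · have : (1 + a) * (1 - a) = 1 - a * a := by noncomm_ring
    rw [this, haa, sub_zero]
  · have : (1 - a) * (1 + a) = 1 - a * a := by noncomm_ring
    rw [this, haa, sub_zero]
end

section
/- Suppose u ∈ ZG is a symmetric unit (u* = u) and u = b·w with b ∈ G of infinite order and w ∈ Z[t(G)] with support contained in the torsion subgroup t(G). Then a contradiction follows; i.e., no symmetric unit has such a form with b of infinite order. Concretely: if b·w is symmetric with w supported on torsion elements, then there exist g in the support of w with (bg)² of finite order, contradicting that b is of infinite order provided t(G) is a normal subgroup. -/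
/-- No symmetric unit of ℤG has the form b·w with b ∈ G of infinite order and w supported
on the torsion subgroup t(G) (assumed to be a normal subgroup). -/
theorem stmt_16 {G : Type*} [Group G] (T : Subgroup G) [T.Normal]
    (hT : ∀ g : G, g ∈ T ↔ IsOfFinOrder g)
    (b : G) (hb : ¬ IsOfFinOrder b) (w : MonoidAlgebra ℤ G)
    (hw : ∀ g ∈ w.coeff.support, g ∈ T)
    (hunit : IsUnit (MonoidAlgebra.of ℤ G b * w))
    (hsym : gstar (MonoidAlgebra.of ℤ G b * w) = MonoidAlgebra.of ℤ G b * w) :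
    False := by
  set u : MonoidAlgebra ℤ G := MonoidAlgebra.of ℤ G b * w with hu
  -- evaluation of the symmetry condition
  have key : ∀ y : G, u.coeff y⁻¹ = u.coeff y := by
    intro y
    have h1 : (gstar u).coeff y⁻¹ = u.coeff y :=
      Finsupp.mapDomain_apply inv_injective u.coeff y
    rwa [hsym] at h1
  have huval : ∀ x : G, u.coeff x = w.coeff (b⁻¹ * x) := by
    intro x
    rw [hu, MonoidAlgebra.of_apply, MonoidAlgebra.coeff_single_mul_apply, one_mul]
  -- w is nonzero
  have hne : w ≠ 0 := by
    rintro rfl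
    rw [mul_zero] at hu
    rw [hu] at hunit
    exact not_isUnit_zero hunit
  obtain ⟨g, hg⟩ := Finsupp.support_nonempty_iff.mpr (MonoidAlgebra.coeff_eq_zero.not.mpr hne)
  have hgT : g ∈ T := hw g hg
  -- the element h := b⁻¹ * g⁻¹ * b⁻¹ is in the support of w
  have hkey := key (b * g)
  rw [huval, huval, mul_inv_rev, inv_mul_cancel_left] at hkey
  have hgne : w.coeff g ≠ 0 := Finsupp.mem_support_iff.mp hg
  have hh : b⁻¹ * (g⁻¹ * b⁻¹) ∈ w.coeff.support := by
    rw [Finsupp.mem_support_iff, hkey]; exact hgne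
  have hhT : b⁻¹ * (g⁻¹ * b⁻¹) ∈ T := hw _ hh
  -- conjugate of g⁻¹ is in T
  have ht : b⁻¹ * g⁻¹ * b ∈ T := by
    have := Subgroup.Normal.conj_mem ‹T.Normal› g⁻¹ (inv_mem hgT) b⁻¹
    simpa using this
  have hbb : b⁻¹ * b⁻¹ ∈ T := by
    have := mul_mem (inv_mem ht) hhT
    have heq : (b⁻¹ * g⁻¹ * b)⁻¹ * (b⁻¹ * (g⁻¹ * b⁻¹)) = b⁻¹ * b⁻¹ := by
      group
    rwa [heq] at this
  have : IsOfFinOrder (b⁻¹ * b⁻¹) := (hT _).mp hbb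
  have hb2 : IsOfFinOrder (b⁻¹ ^ 2) := by rwa [pow_two]
  have := (hb2.of_pow (by norm_num : (2:ℕ) ≠ 0)).inv
  rw [inv_inv] at this
  exact hb this
end
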